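/- Let M ∈ M_2(ℤ) be an expanding matrix with det(M) odd, and let D = {(0,0)^t, (α₁,α₂)^t, (β₁,β₂)^t, (−α₁−β₁, −α₂−β₂)^t} ⊂ ℤ² with α₁β₂ − α₂β₁ odd. Then L²(μ_{M,D}) contains at most 4 mutually orthogonal exponential functions. -/

import Mathlib

open MeasureTheory Matrix Set Complex
open scoped Real Pointwise ENNReal

noncomputable section

namespace SA

variable {n : ℕ}

/-- Cast an integer matrix to a real matrix. -/
def toR (M : Matrix (Fin n) (Fin n) ℤ) : Matrix (Fin n) (Fin n) ℝ :=
  M.map (Int.cast : ℤ → ℝ)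

/-- Cast an integer vector to a real vector. -/
def vecR (d : Fin n → ℤ) : Fin n → ℝ := fun i => (d i : ℝ)

/-- A real matrix is expanding if all of its complex eigenvalues have modulus > 1. -/
def IsExpandingR (M : Matrix (Fin n) (Fin n) ℝ) : Prop :=
  ∀ z : ℂ, (M.map (Complex.ofReal)).charpoly.IsRoot z → 1 < ‖z‖

/-- An integer matrix is expanding if all of its complex eigenvalues have modulus > 1. -/
def IsExpanding (M : Matrix (Fin n) (Fin n) ℤ) : Prop :=
  IsExpandingR (toR M)

/-- Standard inner product on `ℝ^n`. -/
def dotR (x y : Fin n → ℝ) : ℝ := ∑ i, x i * y i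

/-- The exponential function `e_λ(x) = e^{2πi⟨λ,x⟩}`. -/
def expFun (lam : Fin n → ℝ) : (Fin n → ℝ) → ℂ :=
  fun x => Complex.exp (2 * Real.pi * Complex.I * (dotR lam x))

/-- Mask polynomial of a finite real digit set. -/
def maskR (D : Finset (Fin n → ℝ)) (x : Fin n → ℝ) : ℂ :=
  (D.card : ℂ)⁻¹ * ∑ d ∈ D, Complex.exp (2 * Real.pi * Complex.I * (dotR d x))

/-- Zero set of the mask polynomial of a real digit set. -/
def maskZR (D : Finset (Fin n → ℝ)) : Set (Fin n → ℝ) := {x | maskR D x = 0}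

/-- Mask polynomial of a finite integer digit set. -/
def mask (D : Finset (Fin n → ℤ)) (x : Fin n → ℝ) : ℂ :=
  (D.card : ℂ)⁻¹ * ∑ d ∈ D, Complex.exp (2 * Real.pi * Complex.I * (dotR (vecR d) x))

/-- Zero set `Z(m_D)` of the mask polynomial of an integer digit set. -/
def maskZ (D : Finset (Fin n → ℤ)) : Set (Fin n → ℝ) := {x | mask D x = 0}

/-- `Z_D^n := Z(m_D) ∩ [0,1)^n`. -/
def ZDn (D : Finset (Fin n → ℤ)) : Set (Fin n → ℝ) :=
  maskZ D ∩ {x | ∀ i, 0 ≤ x i ∧ x i < 1}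

/-- `E̊_p^n := (1/p){(l₁,…,l_n) : 0 ≤ lᵢ ≤ p-1} \ {0}`. -/
def Ering (p n : ℕ) : Set (Fin n → ℝ) :=
  {x | (∃ l : Fin n → ℕ, (∀ i, l i ≤ p - 1) ∧ ∀ i, x i = (l i : ℝ) / p) ∧ x ≠ 0}

/-- The integer lattice `ℤ^n` inside `ℝ^n`. -/
def latticeZ (n : ℕ) : Set (Fin n → ℝ) := {x | ∀ i, ∃ k : ℤ, x i = (k : ℝ)}

/-- `μ` is the self-affine measure generated by the real expanding matrix `M`
and the real digit set `D`: it is a Borel probability measure satisfying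
`μ = (1/|D|) ∑_{d∈D} μ ∘ φ_d⁻¹` with `φ_d(x) = M⁻¹(x+d)`. -/
def IsSelfAffineR (M : Matrix (Fin n) (Fin n) ℝ) (D : Finset (Fin n → ℝ))
    (μ : Measure (Fin n → ℝ)) : Prop :=
  IsProbabilityMeasure μ ∧
    μ = (D.card : ℝ≥0∞)⁻¹ • ∑ d ∈ D, μ.map (fun x => M⁻¹.mulVec (x + d))

/-- `μ` is the self-affine measure generated by the integer expanding matrix `M`
and the integer digit set `D`. -/
def IsSelfAffine (M : Matrix (Fin n) (Fin n) ℤ) (D : Finset (Fin n → ℤ))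
    (μ : Measure (Fin n → ℝ)) : Prop :=
  IsProbabilityMeasure μ ∧
    μ = (D.card : ℝ≥0∞)⁻¹ • ∑ d ∈ D, μ.map (fun x => (toR M)⁻¹.mulVec (x + vecR d))

/-- Fourier transform `μ̂(ξ) = ∫ e^{2πi⟨x,ξ⟩} dμ(x)`. -/
def FT (μ : Measure (Fin n → ℝ)) (ξ : Fin n → ℝ) : ℂ :=
  ∫ x, Complex.exp (2 * Real.pi * Complex.I * (dotR x ξ)) ∂μ

/-- The family of exponentials `E(Λ)` is mutually orthogonal in `L²(μ)`:
`μ̂(λ - λ') = 0` for all distinct `λ, λ' ∈ Λ`. -/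
def OrthExp (μ : Measure (Fin n → ℝ)) (Λ : Set (Fin n → ℝ)) : Prop :=
  ∀ a ∈ Λ, ∀ b ∈ Λ, a ≠ b → FT μ (a - b) = 0

/-- `Λ` is a spectrum of `μ`: the exponentials `{e^{2πi⟨λ,x⟩} : λ ∈ Λ}` form an
orthonormal (Hilbert) basis of `L²(μ)`. -/
def IsSpectrum (μ : Measure (Fin n → ℝ)) (Λ : Set (Fin n → ℝ)) : Prop :=
  ∃ b : HilbertBasis Λ ℂ (Lp ℂ 2 μ), ∀ l : Λ, (b l : Lp ℂ 2 μ) =ᵐ[μ] expFun (l : Fin n → ℝ)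

/-- `μ` is a spectral measure. -/
def IsSpectralMeasure (μ : Measure (Fin n → ℝ)) : Prop :=
  ∃ Λ : Set (Fin n → ℝ), Λ.Countable ∧ IsSpectrum μ Λ

/-- `(M, D)` is admissible: there is `S ⊂ ℤ^n` with `|S| = |D|` such that
`H = (1/√|S|)[e^{2πi⟨M⁻¹d,s⟩}]_{d∈D,s∈S}` satisfies `H^*H = I`. -/
def Admissible (M : Matrix (Fin n) (Fin n) ℤ) (D : Finset (Fin n → ℤ)) : Prop :=
  ∃ S : Finset (Fin n → ℤ), S.card = D.card ∧
    letI H : Matrix {d // d ∈ D} {s // s ∈ S} ℂ := fun d s =>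
      ((1 : ℂ) / (Real.sqrt S.card : ℂ)) *
        Complex.exp (2 * Real.pi * Complex.I *
          (dotR ((toR M)⁻¹.mulVec (vecR (d : Fin n → ℤ))) (vecR (s : Fin n → ℤ))))
    Hᴴ * H = 1

/-- Two matrices are congruent entrywise modulo `p`. -/
def ModEq (p : ℕ) (A B : Matrix (Fin n) (Fin n) ℤ) : Prop :=
  ∀ i j, (p : ℤ) ∣ (A i j - B i j)

/-- `(M, D)` and `(M̃, D̃)` are conjugate in `GL_n(p)`: there are integer matrices
`A, B` with determinants prime to `p`, `AB ≡ I (mod p)`, `M̃ = AMB`, and either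
`D = B D̃` or `D̃ = A D`. -/
def ConjugateGL (p : ℕ) (M Mt : Matrix (Fin n) (Fin n) ℤ)
    (D Dt : Finset (Fin n → ℤ)) : Prop :=
  ∃ A B : Matrix (Fin n) (Fin n) ℤ,
    ¬ (p : ℤ) ∣ A.det ∧ ¬ (p : ℤ) ∣ B.det ∧ ModEq p (A * B) 1 ∧ Mt = A * M * B ∧
      ((∀ d, d ∈ D ↔ ∃ dt ∈ Dt, d = B.mulVec dt) ∨
       (∀ dt, dt ∈ Dt ↔ ∃ d ∈ D, dt = A.mulVec d))


lemma neg_one_of (z : ℂ) (hz : ‖z‖ = 1) (hre : z.re = -1) : z = -1 := by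
  have h1 : z.re^2 + z.im^2 = 1 := by
    have := Complex.sq_norm z
    rw [hz] at this
    simp only [Complex.normSq_apply] at this
    nlinarith [this]
  have : z.im = 0 := by nlinarith
  apply Complex.ext <;> simp [hre, this]

lemma unit4 {u v : ℂ} (hu : ‖u‖ = 1) (hv : ‖v‖ = 1)
    (h : 1 + u + v + (u*v)⁻¹ = 0) :
    (u = -1 ∧ v = -1) ∨ (u = 1 ∧ v = -1) ∨ (u = -1 ∧ v = 1) := by
  have hu0 : u ≠ 0 := by intro e; rw [e] at hu; simp at hu
  have hv0 : v ≠ 0 := by intro e; rw [e] at hv; simp at hv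
  have huc : (starRingEnd ℂ) u = u⁻¹ := by
    rw [Complex.inv_def, Complex.normSq_eq_norm_sq, hu]; simp
  have hvc : (starRingEnd ℂ) v = v⁻¹ := by
    rw [Complex.inv_def, Complex.normSq_eq_norm_sq, hv]; simp
  have h2 : 1 + u⁻¹ + v⁻¹ + u*v = 0 := by
    have h' := congrArg (starRingEnd ℂ) h
    simp only [map_add, map_inv₀, _root_.map_mul, _root_.map_one, map_zero, huc, hvc] at h'
    rw [← h', _root_.mul_inv_rev, inv_inv, inv_inv]
    ring
  have e1 : u^2*v + u*v^2 + u*v + 1 = 0 := by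
    have := congrArg (· * (u*v)) h
    field_simp at this
    linear_combination this
  have e2 : u^2*v^2 + u + v + u*v = 0 := by
    have := congrArg (· * (u*v)) h2
    field_simp at this
    linear_combination this
  have key : (u*v - 1) * (u*v + 1)^2 = 0 := by
    linear_combination (u*v) * e2 - e1
  rcases mul_eq_zero.mp key with hw | hw
  · have hsum : u + v = -2 := by linear_combination e1 - (u+v+1)*hw
    have hru : u.re + v.re = -2 := by
      have := congrArg Complex.re hsum; simpa using this
    have b1 := Complex.abs_re_le_norm u
    have b2 := Complex.abs_re_le_norm v
    rw [hu] at b1; rw [hv] at b2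
    cases' abs_le.mp b1 with l1 r1
    cases' abs_le.mp b2 with l2 r2
    have hr1 : u.re = -1 := by linarith
    have hr2 : v.re = -1 := by linarith
    exact Or.inl ⟨neg_one_of u hu hr1, neg_one_of v hv hr2⟩
  · have hw1 : u * v = -1 := by
      have := pow_eq_zero_iff (n := 2) (by norm_num) |>.mp hw
      linear_combination this
    have hsum : u + v = 0 := by linear_combination -e1 + (u+v+1)*hw1
    have hvu : v = -u := by linear_combination hsum
    have hu2 : u^2 = 1 := by
      rw [hvu] at hw1; linear_combination -hw1
    have hfac : (u-1)*(u+1) = 0 := by linear_combination hu2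
    rcases mul_eq_zero.mp hfac with h1 | h1
    · refine Or.inr (Or.inl ⟨by linear_combination h1, ?_⟩)
      rw [hvu, show u = 1 by linear_combination h1]
    · refine Or.inr (Or.inr ⟨by linear_combination h1, ?_⟩)
      rw [hvu, show u = -1 by linear_combination h1]; norm_num
-- exp helpers
lemma expR_abs (r : ℝ) : ‖Complex.exp (2*Real.pi*Complex.I*(r:ℝ))‖ = 1 := by
  rw [Complex.norm_exp]
  have : (2*Real.pi*Complex.I*(r:ℝ)).re = 0 := by simp
  rw [this, Real.exp_zero]

lemma expR_eq_one_iff (r : ℝ) :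
    Complex.exp (2*Real.pi*Complex.I*(r:ℝ)) = 1 ↔ ∃ n : ℤ, r = (n:ℝ) := by
  rw [Complex.exp_eq_one_iff]
  constructor
  · rintro ⟨n, hn⟩
    refine ⟨n, ?_⟩
    have h2 : (2*Real.pi*Complex.I) ≠ 0 := by
      simp [Real.pi_ne_zero, Complex.I_ne_zero]
    have : (r:ℂ) = (n:ℂ) := by
      apply mul_left_cancel₀ h2
      rw [hn]; ring
    exact_mod_cast this
  · rintro ⟨n, hn⟩
    exact ⟨n, by rw [hn]; push_cast; ring⟩

lemma expR_add (a b : ℝ) :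
    Complex.exp (2*Real.pi*Complex.I*((a+b:ℝ))) =
    Complex.exp (2*Real.pi*Complex.I*(a:ℝ)) * Complex.exp (2*Real.pi*Complex.I*(b:ℝ)) := by
  rw [← Complex.exp_add]; congr 1; push_cast; ring

lemma expR_neg_one {r : ℝ} (h : Complex.exp (2*Real.pi*Complex.I*(r:ℝ)) = -1) :
    ∃ p : ℤ, 2*r = (p:ℝ) ∧ ¬ Even p := by
  have h2 : Complex.exp (2*Real.pi*Complex.I*((2*r:ℝ))) = 1 := by
    have := expR_add r r
    rw [show r + r = 2*r by ring] at this
    rw [this, h]; norm_num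
  obtain ⟨n, hn⟩ := (expR_eq_one_iff (2*r)).mp h2
  refine ⟨n, hn, ?_⟩
  rintro ⟨m, hm⟩
  have : r = (m:ℝ) := by rw [hm] at hn; push_cast at hn; linarith
  have := (expR_eq_one_iff r).mpr ⟨m, this⟩
  rw [h] at this
  norm_num at this

lemma expR_one {r : ℝ} (h : Complex.exp (2*Real.pi*Complex.I*(r:ℝ)) = 1) :
    ∃ p : ℤ, 2*r = (p:ℝ) ∧ Even p := by
  obtain ⟨n, hn⟩ := (expR_eq_one_iff r).mp h
  exact ⟨2*n, by rw [hn]; push_cast; ring, ⟨n, by ring⟩⟩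
lemma mask_zero_char (α₁ α₂ β₁ β₂ : ℤ) (hαβ : ¬ (2:ℤ) ∣ (α₁*β₂ - α₂*β₁)) (x : Fin 2 → ℝ)
    (h : mask ({![0,0], ![α₁,α₂], ![β₁,β₂], ![-α₁-β₁,-α₂-β₂]} : Finset (Fin 2 → ℤ)) x = 0) :
    ∃ p q : ℤ, 2*((α₁:ℝ)*x 0+(α₂:ℝ)*x 1) = (p:ℝ) ∧ 2*((β₁:ℝ)*x 0+(β₂:ℝ)*x 1) = (q:ℝ) ∧
      ¬(Even p ∧ Even q) := by
  have hne : α₁*β₂ - α₂*β₁ ≠ 0 := fun h0 => hαβ (by rw [h0]; exact dvd_zero 2)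
  have veq : ∀ a b c d : ℤ, (![a,b] : Fin 2 → ℤ) = ![c,d] → a = c ∧ b = d := by
    intro a b c d hh; exact ⟨congrFun hh 0, congrFun hh 1⟩
  have h01 : (![0,0] : Fin 2 → ℤ) ≠ ![α₁,α₂] := by
    intro hh; obtain ⟨e1, e2⟩ := veq _ _ _ _ hh
    exact hne (by linear_combination (-β₂)*e1 + β₁*e2)
  have h02 : (![0,0] : Fin 2 → ℤ) ≠ ![β₁,β₂] := by
    intro hh; obtain ⟨e1, e2⟩ := veq _ _ _ _ hh
    exact hne (by linear_combination α₂*e1 - α₁*e2)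
  have h03 : (![0,0] : Fin 2 → ℤ) ≠ ![-α₁-β₁,-α₂-β₂] := by
    intro hh; obtain ⟨e1, e2⟩ := veq _ _ _ _ hh
    exact hne (by linear_combination β₂*e1 - β₁*e2)
  have h12 : (![α₁,α₂] : Fin 2 → ℤ) ≠ ![β₁,β₂] := by
    intro hh; obtain ⟨e1, e2⟩ := veq _ _ _ _ hh
    exact hne (by linear_combination β₂*e1 - β₁*e2)
  have h13 : (![α₁,α₂] : Fin 2 → ℤ) ≠ ![-α₁-β₁,-α₂-β₂] := by
    intro hh; obtain ⟨e1, e2⟩ := veq _ _ _ _ hh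
    exact hne (by linear_combination (α₂+β₂)*e1 - (α₁+β₁)*e2)
  have h23 : (![β₁,β₂] : Fin 2 → ℤ) ≠ ![-α₁-β₁,-α₂-β₂] := by
    intro hh; obtain ⟨e1, e2⟩ := veq _ _ _ _ hh
    exact hne (by linear_combination -(α₂+β₂)*e1 + (α₁+β₁)*e2)
  set D : Finset (Fin 2 → ℤ) := {![0,0], ![α₁,α₂], ![β₁,β₂], ![-α₁-β₁,-α₂-β₂]} with hDdef
  have hm1 : (![0,0] : Fin 2 → ℤ) ∉ ({![α₁,α₂], ![β₁,β₂], ![-α₁-β₁,-α₂-β₂]} : Finset (Fin 2 → ℤ)) := by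
    simp only [Finset.mem_insert, Finset.mem_singleton]
    push_neg
    exact ⟨h01, h02, h03⟩
  have hm2 : (![α₁,α₂] : Fin 2 → ℤ) ∉ ({![β₁,β₂], ![-α₁-β₁,-α₂-β₂]} : Finset (Fin 2 → ℤ)) := by
    simp only [Finset.mem_insert, Finset.mem_singleton]
    push_neg
    exact ⟨h12, h13⟩
  have hm3 : (![β₁,β₂] : Fin 2 → ℤ) ∉ ({![-α₁-β₁,-α₂-β₂]} : Finset (Fin 2 → ℤ)) := by
    simp only [Finset.mem_singleton]
    exact h23
  have hcard : D.card = 4 := by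
    rw [hDdef]
    rw [Finset.card_insert_of_notMem hm1, Finset.card_insert_of_notMem hm2,
      Finset.card_insert_of_notMem hm3, Finset.card_singleton]
  set a : ℝ := (α₁:ℝ)*x 0+(α₂:ℝ)*x 1 with ha
  set b : ℝ := (β₁:ℝ)*x 0+(β₂:ℝ)*x 1 with hb
  set u : ℂ := Complex.exp (2*Real.pi*Complex.I*(a:ℝ)) with hu
  set v : ℂ := Complex.exp (2*Real.pi*Complex.I*(b:ℝ)) with hv
  have hdot0 : dotR (vecR ![(0:ℤ),0]) x = 0 := by
    simp [dotR, vecR, Fin.sum_univ_two]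
  have hdota : dotR (vecR ![α₁,α₂]) x = a := by
    simp [dotR, vecR, Fin.sum_univ_two, ha]
  have hdotb : dotR (vecR ![β₁,β₂]) x = b := by
    simp [dotR, vecR, Fin.sum_univ_two, hb]
  have hdotc : dotR (vecR ![-α₁-β₁,-α₂-β₂]) x = -(a+b) := by
    simp [dotR, vecR, Fin.sum_univ_two, ha, hb]
    push_cast
    ring
  have hsum : mask D x = (4:ℂ)⁻¹ * (1 + u + v + (u*v)⁻¹) := by
    rw [mask, hcard, hDdef]
    rw [Finset.sum_insert hm1, Finset.sum_insert hm2, Finset.sum_insert hm3,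
      Finset.sum_singleton]
    rw [hdot0, hdota, hdotb, hdotc]
    have hexp0 : Complex.exp (2*Real.pi*Complex.I*((0:ℝ):ℂ)) = 1 := by
      simp
    have hexpc : Complex.exp (2*Real.pi*Complex.I*((-(a+b):ℝ):ℂ)) = (u*v)⁻¹ := by
      rw [show (2*Real.pi*Complex.I*((-(a+b):ℝ):ℂ)) = -(2*Real.pi*Complex.I*((a+b:ℝ):ℂ)) by
        push_cast; ring]
      rw [Complex.exp_neg, expR_add]
    rw [hexp0, hexpc, ← hu, ← hv]
    ring
  rw [hsum] at h
  have h4 : (1 + u + v + (u*v)⁻¹) = 0 := by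
    rcases mul_eq_zero.mp h with h' | h'
    · norm_num at h'
    · exact h'
  have := unit4 (expR_abs a) (expR_abs b) h4
  rcases this with ⟨hu1, hv1⟩ | ⟨hu1, hv1⟩ | ⟨hu1, hv1⟩
  · obtain ⟨p, hp, hpo⟩ := expR_neg_one hu1
    obtain ⟨q, hq, hqo⟩ := expR_neg_one hv1
    exact ⟨p, q, hp, hq, fun he => hpo he.1⟩
  · obtain ⟨p, hp, hpe⟩ := expR_one hu1
    obtain ⟨q, hq, hqo⟩ := expR_neg_one hv1
    exact ⟨p, q, hp, hq, fun he => hqo he.2⟩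
  · obtain ⟨p, hp, hpo⟩ := expR_neg_one hu1
    obtain ⟨q, hq, hqe⟩ := expR_one hv1
    exact ⟨p, q, hp, hq, fun he => hpo he.1⟩
-- Cayley-Hamilton for 2x2 matrices, by hand
lemma ch_two {R : Type*} [CommRing R] (A : Matrix (Fin 2) (Fin 2) R) :
    A * A = A.trace • A - A.det • (1 : Matrix (Fin 2) (Fin 2) R) := by
  ext i j
  fin_cases i <;> fin_cases j <;>
    simp [Matrix.mul_apply, Matrix.trace, Matrix.det_fin_two, Fin.sum_univ_two,
      Matrix.one_apply, Matrix.diag] <;> ring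

-- scalar recurrence convergence
lemma rec_tendsto_zero {μ1 μ2 : ℂ} (h1 : ‖μ1‖ < 1) (h2 : ‖μ2‖ < 1)
    (v : ℕ → ℂ) (hrec : ∀ n, v (n+2) = (μ1+μ2)*v (n+1) - (μ1*μ2)*v n) :
    Filter.Tendsto v Filter.atTop (nhds 0) := by
  set r : ℝ := max (‖μ1‖) (‖μ2‖) with hr
  have hr0 : 0 ≤ r := le_trans (norm_nonneg μ1) (le_max_left _ _)
  have hr1 : r < 1 := max_lt h1 h2
  have hm1 : ‖μ1‖ ≤ r := le_max_left _ _
  have hm2 : ‖μ2‖ ≤ r := le_max_right _ _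
  set w : ℕ → ℂ := fun n => v (n+1) - μ1 * v n with hwdef
  have hw : ∀ n, w (n+1) = μ2 * w n := by
    intro n
    simp only [hwdef]
    rw [hrec n]
    ring
  have hwn : ∀ n, w n = μ2^n * w 0 := by
    intro n
    induction n with
    | zero => simp
    | succ k ih => rw [hw k, ih]; ring
  set A : ℝ := ‖v 1‖ with hA
  set C : ℝ := ‖w 0‖ with hC
  have hA0 : 0 ≤ A := norm_nonneg _
  have hC0 : 0 ≤ C := norm_nonneg _
  have claim : ∀ n : ℕ, ‖v (n+1)‖ ≤ (A + n * C) * r^n := by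
    intro n
    induction n with
    | zero => simp [hA]
    | succ k ih =>
      have hv2 : v (k+2) = μ1 * v (k+1) + w (k+1) := by
        simp only [hwdef]; ring
      have hb : ‖v (k+2)‖ ≤
          ‖μ1‖ * ‖v (k+1)‖ + ‖μ2‖ ^ (k+1) * C := by
        rw [hv2]
        refine le_trans (norm_add_le _ _) (le_of_eq ?_)
        rw [norm_mul, hwn (k+1), norm_mul, norm_pow]
      have hp1 : ‖μ2‖ ^ (k+1) ≤ r^(k+1) := by
        exact pow_le_pow_left₀ (norm_nonneg _) hm2 _
      have hvpos : 0 ≤ ‖v (k+1)‖ := norm_nonneg _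
      have hrp : (0:ℝ) ≤ r^k := pow_nonneg hr0 k
      calc ‖v (k+2)‖ ≤ ‖μ1‖ * ‖v (k+1)‖ +
            ‖μ2‖ ^ (k+1) * C := hb
        _ ≤ r * ((A + k * C) * r^k) + r^(k+1) * C :=
            add_le_add (mul_le_mul hm1 ih hvpos hr0) (mul_le_mul_of_nonneg_right hp1 hC0)
        _ = (A + ((k+1 : ℕ) : ℝ) * C) * r^(k+1) := by push_cast; ring
  have hbound : Filter.Tendsto (fun n : ℕ => (A + n * C) * r^n) Filter.atTop (nhds 0) := by
    have t1 : Filter.Tendsto (fun n : ℕ => A * r^n) Filter.atTop (nhds 0) := by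
      simpa using (tendsto_pow_atTop_nhds_zero_of_lt_one hr0 hr1).const_mul A
    have t2 : Filter.Tendsto (fun n : ℕ => C * (n * r^n)) Filter.atTop (nhds 0) := by
      simpa using (tendsto_self_mul_const_pow_of_lt_one hr0 hr1).const_mul C
    have := t1.add t2
    simp only [add_zero] at this
    refine this.congr (fun n => by ring)
  have habs : Filter.Tendsto (fun n : ℕ => ‖v (n+1)‖) Filter.atTop (nhds 0) :=
    squeeze_zero (fun n => norm_nonneg _) claim hbound
  have hshift : Filter.Tendsto (fun n : ℕ => v (n+1)) Filter.atTop (nhds 0) := by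
    rw [tendsto_zero_iff_norm_tendsto_zero]
    simpa using habs
  exact (Filter.tendsto_add_atTop_iff_nat 1).mp hshift
lemma exists_roots (M : Matrix (Fin 2) (Fin 2) ℤ) (hM : IsExpanding M) :
    ∃ l1 l2 : ℂ, 1 < ‖l1‖ ∧ 1 < ‖l2‖ ∧
      ((toR M).map Complex.ofReal).trace = l1 + l2 ∧
      ((toR M).map Complex.ofReal).det = l1 * l2 := by
  set Ac := (toR M).map Complex.ofReal with hAc
  have hmonic := Ac.charpoly_monic
  have hdeg : Ac.charpoly.natDegree = 2 := by
    rw [Matrix.charpoly_natDegree_eq_dim]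
    simp
  have hsplits : Ac.charpoly.Splits := IsAlgClosed.splits Ac.charpoly
  have hcard : Ac.charpoly.roots.card = 2 := by
    rw [Polynomial.splits_iff_card_roots.mp hsplits, hdeg]
  obtain ⟨l1, l2, hpair⟩ := Multiset.card_eq_two.mp hcard
  have hmem1 : l1 ∈ Ac.charpoly.roots := by rw [hpair]; simp
  have hmem2 : l2 ∈ Ac.charpoly.roots := by rw [hpair]; simp
  have hroot1 : Ac.charpoly.IsRoot l1 :=
    (Polynomial.mem_roots hmonic.ne_zero).mp hmem1
  have hroot2 : Ac.charpoly.IsRoot l2 :=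
    (Polynomial.mem_roots hmonic.ne_zero).mp hmem2
  refine ⟨l1, l2, hM l1 hroot1, hM l2 hroot2, ?_, ?_⟩
  · rw [Matrix.trace_eq_sum_roots_charpoly, hpair]; simp
  · rw [Matrix.det_eq_prod_roots_charpoly, hpair]; simp

lemma tendsto_B_pow_mulVec (M : Matrix (Fin 2) (Fin 2) ℤ) (hM : IsExpanding M)
    (x : Fin 2 → ℝ) :
    Filter.Tendsto (fun N : ℕ => ((((toR M)⁻¹)ᵀ)^N).mulVec x) Filter.atTop (nhds 0) := by
  obtain ⟨l1, l2, hl1, hl2, htr, hdet⟩ := exists_roots M hM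
  set A := toR M with hA
  set Ac := A.map Complex.ofReal with hAc
  have hAcmap : Ac = (Complex.ofRealHom : ℝ →+* ℂ).mapMatrix A := rfl
  have hl10 : l1 ≠ 0 := by
    intro h
    rw [h] at hl1
    simp only [norm_zero] at hl1
    norm_num at hl1
  have hl20 : l2 ≠ 0 := by
    intro h
    rw [h] at hl2
    simp only [norm_zero] at hl2
    norm_num at hl2
  have hdetAc : Ac.det ≠ 0 := by rw [hdet]; exact mul_ne_zero hl10 hl20
  have hdetA : A.det ≠ 0 := by
    intro h
    apply hdetAc
    rw [hAcmap, ← RingHom.map_det, h, map_zero]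
  -- the complex transposed matrix and its inverse
  set Gc := Acᵀ with hGc
  have hdetGc : Gc.det = l1 * l2 := by rw [hGc, Matrix.det_transpose, hdet]
  have hdetGc' : IsUnit Gc.det := by rw [hdetGc]; exact (mul_ne_zero hl10 hl20).isUnit
  set Bc := Gc⁻¹ with hBc
  -- real B
  set B := (A⁻¹)ᵀ with hB
  have hdetAT : IsUnit (Aᵀ).det := by
    rw [Matrix.det_transpose]
    exact hdetA.isUnit
  have hBmap : B.map Complex.ofReal = Bc := by
    have h1 : Gc * (B.map Complex.ofReal) = 1 := by
      have : Gc = (Complex.ofRealHom : ℝ →+* ℂ).mapMatrix (Aᵀ) := by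
        rw [hGc, hAcmap]; rfl
      rw [this, hB, Matrix.transpose_nonsing_inv]
      rw [show ((Aᵀ)⁻¹).map Complex.ofReal =
        (Complex.ofRealHom : ℝ →+* ℂ).mapMatrix ((Aᵀ)⁻¹) from rfl]
      rw [← _root_.map_mul, Matrix.mul_nonsing_inv _ hdetAT, _root_.map_one]
    exact (Matrix.inv_eq_right_inv h1).symm
  -- recurrence for Bc
  have hch : Gc * Gc = Gc.trace • Gc - Gc.det • (1 : Matrix (Fin 2) (Fin 2) ℂ) := ch_two Gc
  have htrGc : Gc.trace = l1 + l2 := by rw [hGc, Matrix.trace_transpose, htr]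
  have hrec : Bc * Bc = (l1⁻¹ + l2⁻¹) • Bc - (l1⁻¹ * l2⁻¹) • (1 : Matrix (Fin 2) (Fin 2) ℂ) := by
    have h1 : Bc * Gc = 1 := Matrix.nonsing_inv_mul _ hdetGc'
    have h2 : Bc * Bc * (Gc * Gc) = 1 := by
      rw [show Bc * Bc * (Gc * Gc) = Bc * ((Bc * Gc) * Gc) by noncomm_ring, h1, one_mul, h1]
    rw [hch, Matrix.mul_sub, Matrix.mul_smul, Matrix.mul_smul, mul_one,
      show Bc * Bc * Gc = Bc * (Bc * Gc) by noncomm_ring, h1, mul_one] at h2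
    -- h2 : Gc.trace • Bc - Gc.det • (Bc * Bc) = 1
    have h3 : Gc.det • (Bc * Bc) = Gc.trace • Bc - 1 := by
      rw [← h2]; abel
    have h4 : Bc * Bc = (Gc.det)⁻¹ • (Gc.trace • Bc - 1) := by
      have hGdne : Gc.det ≠ 0 := by rw [hdetGc]; exact mul_ne_zero hl10 hl20
      rw [← h3, smul_smul, inv_mul_cancel₀ hGdne, one_smul]
    rw [h4, htrGc, hdetGc, smul_sub, smul_smul]
    congr 1
    · congr 1
      field_simp
      ring
    · congr 1
      rw [mul_inv]
  have hinv1 : ‖l1⁻¹‖ < 1 := by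
    rw [norm_inv]
    exact inv_lt_one_of_one_lt₀ hl1
  have hinv2 : ‖l2⁻¹‖ < 1 := by
    rw [norm_inv]
    exact inv_lt_one_of_one_lt₀ hl2
  have hentry : ∀ i j, Filter.Tendsto (fun n : ℕ => (Bc^n) i j) Filter.atTop (nhds 0) := by
    intro i j
    apply rec_tendsto_zero hinv1 hinv2
    intro m
    have hp : Bc^(m+2) = Bc^m * (Bc * Bc) := by rw [pow_add, pow_two]
    rw [hp, hrec, Matrix.mul_sub, Matrix.mul_smul, Matrix.mul_smul, mul_one]
    rw [show Bc^m * Bc = Bc^(m+1) from (pow_succ Bc m).symm]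
    simp [Matrix.sub_apply, Matrix.smul_apply, smul_eq_mul]
  have hBpowmap : ∀ m : ℕ, (B^m).map Complex.ofReal = Bc^m := by
    intro m
    rw [← hBmap]
    exact map_pow (Complex.ofRealHom.mapMatrix : Matrix (Fin 2) (Fin 2) ℝ →+* _) B m
  have hreal : ∀ i j, Filter.Tendsto (fun m : ℕ => (B^m) i j) Filter.atTop (nhds 0) := by
    intro i j
    have h1 := hentry i j
    have h2 : ∀ m : ℕ, (Bc^m) i j = Complex.ofReal ((B^m) i j) := by
      intro m; rw [← hBpowmap m]; rfl
    have h3 : Filter.Tendsto (fun m : ℕ => Complex.ofReal ((B^m) i j))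
        Filter.atTop (nhds 0) := by
      refine h1.congr (fun m => ?_)
      rw [h2 m]
    have h4 := (Complex.continuous_re.tendsto 0).comp h3
    simpa [Function.comp_def] using h4
  rw [tendsto_pi_nhds]
  intro i
  have hfun : (fun N : ℕ => (((B)^N).mulVec x) i) = fun N => ∑ j, (B^N) i j * x j := by
    funext N
    simp [Matrix.mulVec, dotProduct]
  rw [show (0 : Fin 2 → ℝ) i = 0 from rfl]
  rw [hfun]
  have hs : Filter.Tendsto (fun N : ℕ => ∑ j, (B^N) i j * x j) Filter.atTop
      (nhds (∑ _j : Fin 2, (0:ℝ))) :=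
    tendsto_finset_sum _ (fun j _ => by simpa using (hreal i j).mul_const (x j))
  simpa using hs
lemma dotR_mulVec (P : Matrix (Fin 2) (Fin 2) ℝ) (y ξ : Fin 2 → ℝ) :
    dotR (P.mulVec y) ξ = dotR y (Pᵀ.mulVec ξ) := by
  simp only [dotR, Matrix.mulVec, dotProduct, Fin.sum_univ_two, Matrix.transpose_apply]
  ring

lemma dotR_add_left (x y z : Fin 2 → ℝ) : dotR (x + y) z = dotR x z + dotR y z := by
  simp only [dotR, Fin.sum_univ_two, Pi.add_apply]
  ring

lemma cont_exp (ξ : Fin 2 → ℝ) :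
    Continuous (fun x : Fin 2 → ℝ =>
      Complex.exp (2*Real.pi*Complex.I*(dotR x ξ : ℝ))) := by
  apply Complex.continuous_exp.comp
  apply Continuous.mul continuous_const
  apply Complex.continuous_ofReal.comp
  unfold dotR
  exact continuous_finset_sum _ (fun i _ => (continuous_apply i).mul continuous_const)

lemma integrable_exp (μ : Measure (Fin 2 → ℝ)) [IsProbabilityMeasure μ] (ξ : Fin 2 → ℝ) :
    Integrable (fun x : Fin 2 → ℝ =>
      Complex.exp (2*Real.pi*Complex.I*(dotR x ξ : ℝ))) μ := by
  refine Integrable.mono' (integrable_const (1:ℝ)) (cont_exp ξ).aestronglyMeasurable ?_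
  filter_upwards with x
  rw [expR_abs]

lemma mulVec_affine_cont (P : Matrix (Fin 2) (Fin 2) ℝ) (d : Fin 2 → ℝ) :
    Continuous (fun x : Fin 2 → ℝ => P.mulVec (x + d)) := by
  apply continuous_pi
  intro i
  simp only [Matrix.mulVec, dotProduct]
  exact continuous_finset_sum _ (fun j _ =>
    continuous_const.mul (((continuous_apply j).add continuous_const)))

lemma FT_func_eq (M : Matrix (Fin 2) (Fin 2) ℤ) (D : Finset (Fin 2 → ℤ))
    (μ : Measure (Fin 2 → ℝ)) (hμ : IsSelfAffine M D μ) (ξ : Fin 2 → ℝ) :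
    FT μ ξ = mask D ((((toR M)⁻¹)ᵀ).mulVec ξ) * FT μ ((((toR M)⁻¹)ᵀ).mulVec ξ) := by
  obtain ⟨hprob, heq⟩ := hμ
  set B := ((toR M)⁻¹)ᵀ with hB
  set η := B.mulVec ξ with hη
  have hφmeas : ∀ d : Fin 2 → ℤ,
      Measurable (fun x : Fin 2 → ℝ => (toR M)⁻¹.mulVec (x + vecR d)) :=
    fun d => (mulVec_affine_cont _ _).measurable
  have hdot : ∀ d : Fin 2 → ℤ, ∀ x : Fin 2 → ℝ,
      dotR ((toR M)⁻¹.mulVec (x + vecR d)) ξ = dotR x η + dotR (vecR d) η := by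
    intro d x
    rw [dotR_mulVec, ← hB, ← hη, dotR_add_left]
  have key : ∀ d : Fin 2 → ℤ,
      ∫ x, Complex.exp (2*Real.pi*Complex.I*(dotR x ξ : ℝ))
        ∂(μ.map (fun x => (toR M)⁻¹.mulVec (x + vecR d)))
      = Complex.exp (2*Real.pi*Complex.I*(dotR (vecR d) η : ℝ)) * FT μ η := by
    intro d
    rw [integral_map (hφmeas d).aemeasurable (cont_exp ξ).aestronglyMeasurable]
    have : ∀ x : Fin 2 → ℝ,
        Complex.exp (2*Real.pi*Complex.I*(dotR ((toR M)⁻¹.mulVec (x + vecR d)) ξ : ℝ))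
        = Complex.exp (2*Real.pi*Complex.I*(dotR (vecR d) η : ℝ)) *
          Complex.exp (2*Real.pi*Complex.I*(dotR x η : ℝ)) := by
      intro x
      rw [hdot d x, expR_add]
      ring
    rw [MeasureTheory.integral_congr_ae (Filter.Eventually.of_forall this)]
    rw [MeasureTheory.integral_const_mul]
    rfl
  have hint : ∀ d ∈ D, Integrable (fun x : Fin 2 → ℝ =>
      Complex.exp (2*Real.pi*Complex.I*(dotR x ξ : ℝ)))
      (μ.map (fun x => (toR M)⁻¹.mulVec (x + vecR d))) := by
    intro d _
    have : IsProbabilityMeasure (μ.map (fun x => (toR M)⁻¹.mulVec (x + vecR d))) :=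
      Measure.isProbabilityMeasure_map (hφmeas d).aemeasurable
    exact integrable_exp _ ξ
  have step : FT μ ξ = ((D.card : ℝ≥0∞)⁻¹).toReal •
      ∑ d ∈ D, (Complex.exp (2*Real.pi*Complex.I*(dotR (vecR d) η : ℝ)) * FT μ η) := by
    rw [FT]
    conv_lhs => rw [heq]
    rw [MeasureTheory.integral_smul_measure]
    rw [MeasureTheory.integral_finset_sum_measure hint]
    congr 1
    exact Finset.sum_congr rfl (fun d _ => key d)
  rw [step]
  rw [← Finset.sum_mul]
  rw [mask]
  have htoReal : ((D.card : ℝ≥0∞)⁻¹).toReal = ((D.card : ℝ))⁻¹ := by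
    rw [ENNReal.toReal_inv]
    simp
  rw [htoReal]
  rw [Complex.real_smul]
  push_cast
  ring

lemma FT_zero (μ : Measure (Fin 2 → ℝ)) [IsProbabilityMeasure μ] : FT μ 0 = 1 := by
  rw [FT]
  have : ∀ x : Fin 2 → ℝ, Complex.exp (2*Real.pi*Complex.I*(dotR x 0 : ℝ)) = 1 := by
    intro x
    have : dotR x 0 = 0 := by simp [dotR]
    rw [this]
    simp
  rw [MeasureTheory.integral_congr_ae (Filter.Eventually.of_forall this)]
  simp

lemma FT_tendsto_one (μ : Measure (Fin 2 → ℝ)) [IsProbabilityMeasure μ]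
    (ξ : ℕ → Fin 2 → ℝ) (hξ : Filter.Tendsto ξ Filter.atTop (nhds 0)) :
    Filter.Tendsto (fun N => FT μ (ξ N)) Filter.atTop (nhds 1) := by
  have h1 : Filter.Tendsto (fun N => FT μ (ξ N)) Filter.atTop (nhds (FT μ 0)) := by
    apply MeasureTheory.tendsto_integral_of_dominated_convergence (fun _ => (1:ℝ))
    · intro N
      exact (cont_exp (ξ N)).aestronglyMeasurable
    · exact integrable_const 1
    · intro N
      filter_upwards with x
      rw [expR_abs]
    · filter_upwards with x
      have hc : Continuous (fun η : Fin 2 → ℝ =>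
          Complex.exp (2*Real.pi*Complex.I*(dotR x η : ℝ))) := by
        apply Complex.continuous_exp.comp
        apply Continuous.mul continuous_const
        apply Complex.continuous_ofReal.comp
        unfold dotR
        exact continuous_finset_sum _ (fun i _ => continuous_const.mul (continuous_apply i))
      exact (hc.tendsto 0).comp hξ
  rwa [FT_zero μ] at h1

lemma FT_iter (M : Matrix (Fin 2) (Fin 2) ℤ) (D : Finset (Fin 2 → ℤ))
    (μ : Measure (Fin 2 → ℝ)) (hμ : IsSelfAffine M D μ) (ξ : Fin 2 → ℝ) (N : ℕ) :
    FT μ ξ = (∏ j ∈ Finset.range N, mask D (((((toR M)⁻¹)ᵀ)^(j+1)).mulVec ξ)) *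
      FT μ (((((toR M)⁻¹)ᵀ)^N).mulVec ξ) := by
  set B := ((toR M)⁻¹)ᵀ with hB
  induction N with
  | zero =>
    simp [Matrix.one_mulVec]
  | succ k ih =>
    rw [ih]
    have hstep := FT_func_eq M D μ hμ ((B^k).mulVec ξ)
    rw [Matrix.mulVec_mulVec] at hstep
    rw [show B * B^k = B^(k+1) from (pow_succ' B k).symm] at hstep
    rw [hstep, Finset.prod_range_succ]
    ring

lemma FT_zero_implies_mask_zero (M : Matrix (Fin 2) (Fin 2) ℤ) (hM : IsExpanding M)
    (D : Finset (Fin 2 → ℤ)) (μ : Measure (Fin 2 → ℝ)) (hμ : IsSelfAffine M D μ)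
    (δ : Fin 2 → ℝ) (hδ : FT μ δ = 0) :
    ∃ j : ℕ, 1 ≤ j ∧ mask D (((((toR M)⁻¹)ᵀ)^j).mulVec δ) = 0 := by
  by_contra hcon
  push_neg at hcon
  have hmask : ∀ j : ℕ, mask D (((((toR M)⁻¹)ᵀ)^(j+1)).mulVec δ) ≠ 0 := by
    intro j
    exact hcon (j+1) (Nat.le_add_left 1 j)
  haveI : IsProbabilityMeasure μ := hμ.1
  have htend : Filter.Tendsto (fun N => FT μ (((((toR M)⁻¹)ᵀ)^N).mulVec δ))
      Filter.atTop (nhds 1) :=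
    FT_tendsto_one μ _ (tendsto_B_pow_mulVec M hM δ)
  have hev : ∃ N, FT μ (((((toR M)⁻¹)ᵀ)^N).mulVec δ) ≠ 0 := by
    by_contra hall
    push_neg at hall
    have : Filter.Tendsto (fun N => FT μ (((((toR M)⁻¹)ᵀ)^N).mulVec δ))
        Filter.atTop (nhds 0) := by
      simp only [hall]
      exact tendsto_const_nhds
    have h01 : (0 : ℂ) = 1 := tendsto_nhds_unique this htend
    norm_num at h01
  obtain ⟨N, hN⟩ := hev
  have := FT_iter M D μ hμ δ N
  rw [hδ] at this
  have hprod : (∏ j ∈ Finset.range N, mask D (((((toR M)⁻¹)ᵀ)^(j+1)).mulVec δ)) ≠ 0 :=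
    Finset.prod_ne_zero_iff.mpr (fun j _ => hmask j)
  exact (mul_ne_zero hprod hN) this.symm
-- Part E: integer/mod-2 lemmas
lemma vecR_injective : Function.Injective (vecR (n := 2)) := by
  intro a b h
  funext i
  have := congrFun h i
  simpa [vecR] using this

lemma vecR_mulVec (X : Matrix (Fin 2) (Fin 2) ℤ) (v : Fin 2 → ℤ) :
    vecR (X.mulVec v) = (toR X).mulVec (vecR v) := by
  funext i
  simp [Matrix.mulVec, dotProduct, vecR, toR, Fin.sum_univ_two, Matrix.map_apply]

lemma vecR_zsmul (c : ℤ) (v : Fin 2 → ℤ) : vecR (c • v) = (c:ℝ) • vecR v := by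
  funext i
  simp [vecR]

lemma toR_eq (X : Matrix (Fin 2) (Fin 2) ℤ) :
    toR X = (Int.castRingHom ℝ).mapMatrix X := rfl

lemma toR_mul (X Y : Matrix (Fin 2) (Fin 2) ℤ) : toR (X*Y) = toR X * toR Y := by
  rw [toR_eq, toR_eq, toR_eq, _root_.map_mul]

lemma adjugate_eq_det_smul_inv (G : Matrix (Fin 2) (Fin 2) ℝ) (h : IsUnit G.det) :
    G.adjugate = G.det • G⁻¹ := by
  have h1 : G⁻¹ * (G * G.adjugate) = G.adjugate := by
    rw [← mul_assoc, Matrix.nonsing_inv_mul _ h, one_mul]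
  rw [Matrix.mul_adjugate] at h1
  rw [← h1, Matrix.mul_smul, mul_one]

-- the key conjugation identity
lemma key_conj (M T : Matrix (Fin 2) (Fin 2) ℤ)
    (hdM : (M.det : ℝ) ≠ 0) (hdT : (T.det : ℝ) ≠ 0) :
    toR (T * (Mᵀ).adjugate * T.adjugate) * toR T =
      (((M.det * T.det : ℤ) : ℝ)) • (toR T * ((toR M)⁻¹)ᵀ) := by
  have hmapadj : ∀ X : Matrix (Fin 2) (Fin 2) ℤ, toR (X.adjugate) = (toR X).adjugate := by
    intro X
    rw [toR_eq, toR_eq]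
    exact (Int.castRingHom ℝ).map_adjugate X
  have htrans : toR (Mᵀ) = (toR M)ᵀ := rfl
  have hdetG : ((toR M)ᵀ).det = (M.det : ℝ) := by
    rw [Matrix.det_transpose, toR_eq, ← RingHom.map_det]
    rfl
  have hdetT : (toR T).det = (T.det : ℝ) := by
    rw [toR_eq, ← RingHom.map_det]; rfl
  have hGu : IsUnit ((toR M)ᵀ).det := by rw [hdetG]; exact hdM.isUnit
  have hTu : IsUnit (toR T).det := by rw [hdetT]; exact hdT.isUnit
  rw [toR_mul, toR_mul, hmapadj, hmapadj, htrans]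
  rw [adjugate_eq_det_smul_inv _ hGu, adjugate_eq_det_smul_inv _ hTu]
  rw [hdetG, hdetT, Matrix.transpose_nonsing_inv]
  have grp : toR T * ((M.det:ℝ) • ((toR M)ᵀ)⁻¹) * ((T.det:ℝ) • (toR T)⁻¹) * toR T
      = ((M.det:ℝ) * (T.det:ℝ)) • (toR T * ((toR M)ᵀ)⁻¹) := by
    simp only [Matrix.mul_smul, Matrix.smul_mul, smul_smul]
    rw [mul_assoc (toR T * ((toR M)ᵀ)⁻¹), Matrix.nonsing_inv_mul _ hTu, mul_one]
    congr 1
    ring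
  rw [grp]
  norm_cast

lemma prop_iter (M T : Matrix (Fin 2) (Fin 2) ℤ)
    (hdM : (M.det : ℝ) ≠ 0) (hdT : (T.det : ℝ) ≠ 0)
    (δ : Fin 2 → ℝ) (v : Fin 2 → ℤ) (j : ℕ)
    (hbase : vecR v = (2:ℝ) • (toR T).mulVec (((((toR M)⁻¹)ᵀ)^j).mulVec δ)) :
    ∀ m : ℕ, vecR (((T * (Mᵀ).adjugate * T.adjugate)^m).mulVec v) =
      (((M.det * T.det : ℤ) : ℝ)^m) •
        ((2:ℝ) • (toR T).mulVec (((((toR M)⁻¹)ᵀ)^(j+m)).mulVec δ)) := by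
  set B := ((toR M)⁻¹)ᵀ with hB
  set Rm := T * (Mᵀ).adjugate * T.adjugate with hRm
  intro m
  induction m with
  | zero => simpa using hbase
  | succ k ih =>
    have h1 : (Rm^(k+1)).mulVec v = Rm.mulVec ((Rm^k).mulVec v) := by
      rw [Matrix.mulVec_mulVec, ← pow_succ']
    rw [h1, vecR_mulVec, ih]
    rw [Matrix.mulVec_smul, Matrix.mulVec_smul]
    rw [Matrix.mulVec_mulVec]
    rw [key_conj M T hdM hdT]
    rw [← hB, Matrix.smul_mulVec, ← Matrix.mulVec_mulVec]
    have h2 : B.mulVec ((B^(j+k)).mulVec δ) = (B^(j+(k+1))).mulVec δ := by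
      rw [Matrix.mulVec_mulVec, ← pow_succ']
      ring_nf
    rw [h2]
    rw [smul_smul, smul_smul, smul_smul]
    congr 1
    ring

lemma mod2_vec_ne (X : Matrix (Fin 2) (Fin 2) ℤ) (hdet : ¬ (2:ℤ) ∣ X.det)
    (u : Fin 2 → ZMod 2) (hu : u ≠ 0) :
    (X.map (Int.cast : ℤ → ZMod 2)).mulVec u ≠ 0 := by
  set Xb := X.map (Int.cast : ℤ → ZMod 2) with hXb
  have hXbmap : Xb = (Int.castRingHom (ZMod 2)).mapMatrix X := rfl
  have hdetXb : Xb.det ≠ 0 := by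
    rw [hXbmap, ← RingHom.map_det]
    simp only [Int.coe_castRingHom]
    rw [Ne, ZMod.intCast_zmod_eq_zero_iff_dvd]
    exact_mod_cast hdet
  intro h0
  apply hu
  have h1 : (Xb⁻¹ * Xb).mulVec u = u := by
    rw [Matrix.nonsing_inv_mul _ (isUnit_iff_ne_zero.mpr hdetXb), Matrix.one_mulVec]
  rw [← h1, ← Matrix.mulVec_mulVec, h0, Matrix.mulVec_zero]

lemma phi_mulVec (X : Matrix (Fin 2) (Fin 2) ℤ) (v : Fin 2 → ℤ) :
    (fun t => (((X.mulVec v) t : ℤ) : ZMod 2)) =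
      (X.map (Int.cast : ℤ → ZMod 2)).mulVec (fun t => ((v t : ℤ) : ZMod 2)) := by
  funext t
  simp [Matrix.mulVec, dotProduct, Fin.sum_univ_two, Matrix.map_apply]

lemma phi_zsmul (c : ℤ) (v : Fin 2 → ℤ) :
    (fun t => (((c • v) t : ℤ) : ZMod 2)) = (c : ZMod 2) • (fun t => ((v t : ℤ) : ZMod 2)) := by
  funext t
  simp [smul_eq_mul]

lemma odd_cast_one {c : ℤ} (h : ¬ (2:ℤ) ∣ c) : (c : ZMod 2) = 1 := by
  rcases Int.even_or_odd c with he | ho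
  · exact absurd he.two_dvd h
  · obtain ⟨k, hk⟩ := ho
    rw [hk]
    push_cast
    rw [show ((2:ZMod 2)) = 0 from rfl]
    ring

/-- at most 4 mutually orthogonal exponentials. -/
theorem orth_card_le_four (M : Matrix (Fin 2) (Fin 2) ℤ) (hM : IsExpanding M)
    (hdet : ¬ (2 : ℤ) ∣ M.det) (α₁ α₂ β₁ β₂ : ℤ)
    (hαβ : ¬ (2 : ℤ) ∣ (α₁ * β₂ - α₂ * β₁))
    (D : Finset (Fin 2 → ℤ))
    (hD : D = {![0, 0], ![α₁, α₂], ![β₁, β₂], ![-α₁ - β₁, -α₂ - β₂]})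
    (μ : Measure (Fin 2 → ℝ)) (hμ : IsSelfAffine M D μ)
    (Λ : Finset (Fin 2 → ℝ)) (hΛ : OrthExp μ (Λ : Set (Fin 2 → ℝ))) :
    Λ.card ≤ 4 := by
  subst hD
  by_contra hcard
  push_neg at hcard
  have h5le : 5 ≤ Λ.card := hcard
  obtain ⟨t, hts, htcard⟩ := Finset.exists_subset_card_eq h5le
  have hcardt : Fintype.card ↑t = 5 := by rw [Fintype.card_coe, htcard]
  set e := Fintype.equivFinOfCardEq hcardt with he
  set lam : Fin 5 → (Fin 2 → ℝ) := fun i => ((e.symm i : ↑t) : Fin 2 → ℝ) with hlam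
  have hlam_mem : ∀ i, lam i ∈ Λ := fun i => hts (e.symm i).2
  have hlam_inj : Function.Injective lam := fun i k h =>
    e.symm.injective (Subtype.coe_injective h)
  set T : Matrix (Fin 2) (Fin 2) ℤ := ![![α₁,α₂],![β₁,β₂]] with hT
  have hdetT : T.det = α₁*β₂ - α₂*β₁ := by
    rw [Matrix.det_fin_two, hT]
    simp
  have hdToddvd : ¬ (2:ℤ) ∣ T.det := by rw [hdetT]; exact hαβ
  have hdM : (M.det : ℝ) ≠ 0 := by
    intro h
    have : M.det = 0 := by exact_mod_cast h
    exact hdet (this ▸ dvd_zero 2)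
  have hdT : (T.det : ℝ) ≠ 0 := by
    intro h
    have : T.det = 0 := by exact_mod_cast h
    exact hdToddvd (this ▸ dvd_zero 2)
  set B := ((toR M)⁻¹)ᵀ with hB
  set Rm : Matrix (Fin 2) (Fin 2) ℤ := T * (Mᵀ).adjugate * T.adjugate with hRm
  set D0 : ℤ := M.det * T.det with hD0
  have hD0odd : ¬ (2:ℤ) ∣ D0 := by
    intro h
    rcases (Int.Prime.dvd_mul' Nat.prime_two h) with h1 | h1
    · exact hdet h1
    · exact hdToddvd h1
  have hRmodd : ¬ (2:ℤ) ∣ Rm.det := by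
    have hval : Rm.det = T.det * M.det * T.det := by
      rw [hRm, Matrix.det_mul, Matrix.det_mul, Matrix.det_adjugate, Matrix.det_adjugate,
        Matrix.det_transpose]
      simp [pow_one]
    rw [hval]
    intro h
    rcases (Int.Prime.dvd_mul' Nat.prime_two h) with h1 | h1
    · rcases (Int.Prime.dvd_mul' Nat.prime_two h1) with h2 | h2
      · exact hdToddvd h2
      · exact hdet h2
    · exact hdToddvd h1
  -- mulVec of T in coordinates
  have hTvec : ∀ x : Fin 2 → ℝ, (toR T).mulVec x =
      ![((α₁:ℝ)*x 0+(α₂:ℝ)*x 1), ((β₁:ℝ)*x 0+(β₂:ℝ)*x 1)] := by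
    intro x
    funext i
    fin_cases i <;>
      simp [hT, toR, Matrix.mulVec, dotProduct, Fin.sum_univ_two, Matrix.map_apply, Matrix.map]
  -- per-pair data
  have pair : ∀ i k : Fin 5, ∃ (j : ℕ) (v : Fin 2 → ℤ), 1 ≤ j ∧ (i ≠ k →
      (vecR v = (2:ℝ) • (toR T).mulVec ((B^j).mulVec (lam i - lam k)) ∧
        ¬(Even (v 0) ∧ Even (v 1)))) := by
    intro i k
    by_cases hik : i = k
    · exact ⟨1, 0, le_refl 1, fun h => absurd hik h⟩
    · have hne : lam i ≠ lam k := fun h => hik (hlam_inj h)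
      have hFT : FT μ (lam i - lam k) = 0 :=
        hΛ _ (hlam_mem i) _ (hlam_mem k) hne
      obtain ⟨j, hj1, hjmask⟩ := FT_zero_implies_mask_zero M hM _ μ hμ _ hFT
      obtain ⟨p, q, hp, hq, hpq⟩ := mask_zero_char α₁ α₂ β₁ β₂ hαβ _ hjmask
      refine ⟨j, ![p,q], hj1, fun _ => ⟨?_, ?_⟩⟩
      · funext w
        rw [hTvec]
        fin_cases w
        · simpa [vecR] using hp.symm
        · simpa [vecR] using hq.symm
      · simpa using hpq
  choose J V hJ1 hJ2 using pair
  have hle : ∀ i k : Fin 5, J i k ≤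
      (Finset.univ : Finset (Fin 5 × Fin 5)).sup (fun pr => J pr.1 pr.2) := by
    intro i k
    exact Finset.le_sup (f := fun pr : Fin 5 × Fin 5 => J pr.1 pr.2) (Finset.mem_univ (i,k))
  set jstar := (Finset.univ : Finset (Fin 5 × Fin 5)).sup (fun pr => J pr.1 pr.2) with hjstar
  set y : Fin 5 → (Fin 2 → ℝ) :=
    fun i => (2:ℝ) • (toR T).mulVec ((B^jstar).mulVec (lam i)) with hy
  set u : Fin 5 → Fin 5 → (Fin 2 → ℤ) :=
    fun i k => (D0 ^ (J i k)) • ((Rm^(jstar - J i k)).mulVec (V i k)) with hu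
  have hukey : ∀ i k, i ≠ k → vecR (u i k) = ((D0:ℝ)^jstar) • (y i - y k) := by
    intro i k hik
    obtain ⟨hbase, hodd⟩ := hJ2 i k hik
    have hit := prop_iter M T hdM hdT (lam i - lam k) (V i k) (J i k) hbase (jstar - J i k)
    have hexp : J i k + (jstar - J i k) = jstar := by
      have := hle i k
      omega
    rw [hexp] at hit
    have hstep : vecR (u i k) = ((D0:ℝ)^(J i k)) • vecR ((Rm^(jstar - J i k)).mulVec (V i k)) := by
      rw [hu]
      rw [vecR_zsmul]
      push_cast
      ring_nf
    rw [hstep, hit]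
    rw [smul_smul]
    rw [← pow_add, hexp]
    congr 1
    rw [hy]
    simp only [Matrix.mulVec_sub, smul_sub]
    rfl
  -- classes of u are nonzero mod 2
  have hcne : ∀ i k, i ≠ k → (fun w => (((u i k) w : ℤ) : ZMod 2)) ≠ 0 := by
    intro i k hik
    obtain ⟨hbase, hodd⟩ := hJ2 i k hik
    have h1 : (fun w => (((u i k) w : ℤ) : ZMod 2)) =
        ((D0 ^ (J i k) : ℤ) : ZMod 2) •
          ((Rm^(jstar - J i k)).map (Int.cast : ℤ → ZMod 2)).mulVec
            (fun w => (((V i k) w : ℤ) : ZMod 2)) := by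
      rw [hu]
      rw [phi_zsmul, phi_mulVec]
    have hD0one : ((D0 ^ (J i k) : ℤ) : ZMod 2) = 1 := by
      push_cast
      rw [odd_cast_one hD0odd]
      simp
    have hVne : (fun w => (((V i k) w : ℤ) : ZMod 2)) ≠ 0 := by
      intro h0
      apply hodd
      constructor
      · have h00 := congrFun h0 0
        simp only [Pi.zero_apply] at h00
        have hdv : (2:ℤ) ∣ V i k 0 :=
          (ZMod.intCast_zmod_eq_zero_iff_dvd _ 2).mp (by exact_mod_cast h00)
        obtain ⟨m, hm⟩ := hdv
        exact ⟨m, by omega⟩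
      · have h00 := congrFun h0 1
        simp only [Pi.zero_apply] at h00
        have hdv : (2:ℤ) ∣ V i k 1 :=
          (ZMod.intCast_zmod_eq_zero_iff_dvd _ 2).mp (by exact_mod_cast h00)
        obtain ⟨m, hm⟩ := hdv
        exact ⟨m, by omega⟩
    have hRmpodd : ¬ (2:ℤ) ∣ (Rm^(jstar - J i k)).det := by
      rw [Matrix.det_pow]
      intro h
      have := Int.Prime.dvd_pow' Nat.prime_two h
      exact hRmodd (by exact_mod_cast this)
    rw [h1, hD0one, one_smul]
    exact mod2_vec_ne _ hRmpodd _ hVne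
  -- the z function and injection into (ZMod 2)^2
  set z : Fin 5 → (Fin 2 → ℤ) := fun i => if i = 0 then 0 else u i 0 with hz
  have hzvec : ∀ i, vecR (z i) = ((D0:ℝ)^jstar) • (y i - y 0) := by
    intro i
    by_cases hi : i = 0
    · subst hi
      rw [hz]
      simp only [if_pos rfl, sub_self, smul_zero]
      funext w
      simp [vecR]
    · rw [hz]
      simp only [if_neg hi]
      exact hukey i 0 hi
  have hzdiff : ∀ i k, i ≠ k → z i - z k = u i k := by
    intro i k hik
    apply vecR_injective
    have hadd : vecR (z i - z k) = vecR (z i) - vecR (z k) := by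
      funext w
      simp [vecR]
    rw [hadd, hzvec i, hzvec k, hukey i k hik, ← smul_sub]
    congr 1
    abel
  set h5 : Fin 5 → (Fin 2 → ZMod 2) := fun i w => (((z i) w : ℤ) : ZMod 2) with hh5
  have hinj : Function.Injective h5 := by
    intro i k hik5
    by_contra hik
    apply hcne i k hik
    rw [← hzdiff i k hik]
    funext w
    have := congrFun hik5 w
    rw [hh5] at this
    simp only at this
    simp only [Pi.sub_apply, Pi.zero_apply]
    push_cast
    rw [this]
    ring
  have hcount := Fintype.card_le_of_injective h5 hinj
  rw [Fintype.card_fin] at hcount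
  have : Fintype.card (Fin 2 → ZMod 2) = 4 := by
    rw [Fintype.card_fun]
    rfl
  omega

end SA
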